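/- In Dijkstra's algorithm on a graph with nonnegative edge weights, when a vertex u with minimum tentative distance among unfinalized vertices is extracted, its tentative distance equals the true shortest-path distance from the source. -/

import Mathlib

open scoped ENNReal

/-- The cost of a walk (list of vertices) under edge weights `w`. -/
noncomputable def walkCost {V : Type*} (w : V → V → ℝ≥0∞) : List V → ℝ≥0∞
  | a :: b :: t => w a b + walkCost w (b :: t)
  | _ => 0
termination_by l => l.length

/-- `IsWalk s v p`: the list `p` is a walk from `s` to `v`. -/
def IsWalk {V : Type*} (s v : V) (p : List V) : Prop :=
  p.head? = some s ∧ p.getLast? = some v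

lemma walkCost_cons_cons {V : Type*} (w : V → V → ℝ≥0∞) (a b : V) (t : List V) :
    walkCost w (a :: b :: t) = w a b + walkCost w (b :: t) := by
  rw [walkCost]

lemma walkCost_dropLast_le {V : Type*} (w : V → V → ℝ≥0∞) :
    ∀ p : List V, walkCost w p.dropLast ≤ walkCost w p
  | [] => le_refl _
  | [_] => by simp [walkCost]
  | [a, b] => by simp [walkCost]
  | a :: b :: c :: t => by
    have h := walkCost_dropLast_le w (b :: c :: t)
    have e : (a :: b :: c :: t).dropLast = a :: b :: (c :: t).dropLast := rfl
    have e2 : (b :: c :: t).dropLast = b :: (c :: t).dropLast := rfl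
    rw [e, walkCost_cons_cons, walkCost_cons_cons, ← e2]
    exact add_le_add (le_refl _) h

/-- Dijkstra's key step: with nonnegative weights, if `d` satisfies the Dijkstra
    invariant with respect to the finalized set `F` (containing the source `s`),
    then an unfinalized vertex `u` minimizing `d` satisfies
    `d u = dist s u`, the true shortest-path distance. -/
theorem stmt10 {V : Type*} [Fintype V] (w : V → V → ℝ≥0∞) (s : V)
    (F : Finset V) (hs : s ∈ F) (d : V → ℝ≥0∞)
    (dist : V → ℝ≥0∞)
    (hdist : ∀ v, dist v = ⨅ (p : List V) (_ : IsWalk s v p), walkCost w p)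
    (hfin : ∀ v ∈ F, d v = dist v)
    (hunfin : ∀ v ∉ F, d v =
      ⨅ (p : List V) (_ : IsWalk s v p ∧ ∀ x ∈ p.dropLast, x ∈ F),
        walkCost w p)
    (u : V) (hu : u ∉ F) (hmin : ∀ v ∉ F, d u ≤ d v) :
    d u = dist u := by
  have key : ∀ n (p : List V) (v : V), p.length ≤ n → IsWalk s v p →
      (∃ x ∈ p, x ∉ F) → d u ≤ walkCost w p := by
    intro n
    induction n with
    | zero =>
      rintro p v hlen ⟨hh, _⟩ _
      interval_cases hp : p.length
      · rw [List.length_eq_zero_iff] at hp; subst hp; simp at hh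
    | succ n ih =>
      rintro p v hlen ⟨hh, hl⟩ hex
      have hpne : p ≠ [] := by rintro rfl; simp at hh
      by_cases hall : ∀ x ∈ p.dropLast, x ∈ F
      · have hv : v ∉ F := by
          obtain ⟨x, hxp, hxF⟩ := hex
          have hdec := List.dropLast_append_getLast hpne
          have hxv : x ∈ p.dropLast ∨ x = v := by
            rw [← hdec] at hxp
            rcases List.mem_append.1 hxp with h | h
            · exact Or.inl h
            · right
              simp only [List.mem_singleton] at h
              have := List.getLast?_eq_getLast hpne
              rw [hl] at this
              exact h.trans (Option.some_injective _ this.symm)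
          rcases hxv with h | rfl
          · exact absurd (hall x h) hxF
          · exact hxF
        calc d u ≤ d v := hmin v hv
          _ ≤ walkCost w p := by
            rw [hunfin v hv]
            exact iInf₂_le p ⟨⟨hh, hl⟩, hall⟩
      · push_neg at hall
        obtain ⟨x, hx, hxF⟩ := hall
        have hqne : p.dropLast ≠ [] := by rintro h; rw [h] at hx; simp at hx
        have hlen2 : 1 < p.length := by
          rcases p with _ | ⟨a, _ | ⟨b, t⟩⟩
          · simp at hh
          · simp at hqne
          · simp
        have hqh : p.dropLast.head? = some s := by
          rw [List.head?_dropLast, if_pos hlen2, hh]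
        have hwalk : IsWalk s (p.dropLast.getLast hqne) p.dropLast :=
          ⟨hqh, List.getLast?_eq_getLast hqne⟩
        have hlen' : p.dropLast.length ≤ n := by
          rw [List.length_dropLast]; omega
        exact (ih p.dropLast _ hlen' hwalk ⟨x, hx, hxF⟩).trans
          (walkCost_dropLast_le w p)
  have h1 : d u ≤ dist u := by
    rw [hdist u]
    refine le_iInf fun p => le_iInf fun hp => ?_
    have hup : u ∈ p := by
      obtain ⟨hh, hl⟩ := hp
      have hpne : p ≠ [] := by rintro rfl; simp at hh
      have := List.getLast?_eq_getLast hpne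
      rw [hl] at this
      rw [Option.some_injective _ this]
      exact List.getLast_mem hpne
    exact key p.length p u le_rfl hp ⟨u, hup, hu⟩
  have h2 : dist u ≤ d u := by
    rw [hdist u, hunfin u hu]
    exact le_iInf₂ fun p hp => iInf₂_le p hp.1
  exact le_antisymm h1 h2
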